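/- The kernel of the linear map R_H : ℂ[K] → ℂ[H*] coincides with the ℂ-linear span of the basis elements e_g with g ∈ K \ H. -/

import Mathlib

/-- The character group `K* = Hom(K, ℂˣ)` of a finite abelian group is finite. -/
instance charFinite (K : Type*) [CommGroup K] [Finite K] : Finite (K →* ℂˣ) := by
  have : Fintype K := .ofFinite _
  let S := rootsOfUnity (Fintype.card K) ℂ
  have fF : Finite (K →* S) := .of_injective _ DFunLike.coe_injective
  refine Finite.of_surjective (fun f : K →* S ↦ (Subgroup.subtype _).comp f) fun f ↦ ?_
  have H : ∀ a, f a ∈ S := by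
    intro a
    simp only [mem_rootsOfUnity, ← map_pow, pow_card_eq_one, map_one, S]
  exact ⟨MonoidHom.codRestrict f S H, MonoidHom.ext fun _ ↦ rfl⟩

noncomputable instance charFintype (K : Type*) [CommGroup K] [Finite K] : Fintype (K →* ℂˣ) :=
  Fintype.ofFinite _

/-- `ê_α = ∑_{g ∈ K} α(g)⁻¹ e_g` in the group algebra `ℂ[K]`. -/
noncomputable def ehat {K : Type*} [CommGroup K] [Fintype K] (α : K →* ℂˣ) :
    MonoidAlgebra ℂ K :=
  ∑ g : K, MonoidAlgebra.single g ((((α g)⁻¹ : ℂˣ) : ℂ))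

/-- `ψ_β : ℂ[K] → ℂ[K]`, the linear map determined by `ψ_β(e_g) = β(g) e_g`. -/
noncomputable def psi {K : Type*} [CommGroup K] [Fintype K] (β : K →* ℂˣ) :
    MonoidAlgebra ℂ K →ₗ[ℂ] MonoidAlgebra ℂ K :=
  (Finsupp.lift (MonoidAlgebra ℂ K) ℂ K fun g => ((β g : ℂˣ) : ℂ) • MonoidAlgebra.single g 1)
    ∘ₗ (MonoidAlgebra.coeffLinearEquiv ℂ).toLinearMap

/-- `R_H : ℂ[K] → ℂ[H*]`, the linear map with `R_H(e_g) = ∑_{α ∈ K*} α(g) e_{α|_H}`. -/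
noncomputable def RH {K : Type*} [CommGroup K] [Fintype K] (H : Subgroup K) :
    MonoidAlgebra ℂ K →ₗ[ℂ] MonoidAlgebra ℂ (H →* ℂˣ) :=
  (Finsupp.lift (MonoidAlgebra ℂ (H →* ℂˣ)) ℂ K fun g =>
    ∑ α : K →* ℂˣ, ((α g : ℂˣ) : ℂ) • MonoidAlgebra.single (α.comp H.subtype) 1)
    ∘ₗ (MonoidAlgebra.coeffLinearEquiv ℂ).toLinearMap


section aux

variable {K : Type*} [CommGroup K] [Fintype K]

/-- Orthogonality: the sum of all characters of `K` at `y ≠ 1` vanishes. -/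
lemma charSum_eq_zero {y : K} (hy : y ≠ 1) :
    ∑ α : K →* ℂˣ, ((α y : ℂˣ) : ℂ) = 0 := by
  have hne : (Monoid.exponent K : ℂ) ≠ 0 := by
    exact_mod_cast Monoid.exponent_ne_zero_of_finite
  have : NeZero ((Monoid.exponent K : ℂ)) := ⟨hne⟩
  obtain ⟨β, hβ⟩ := CommGroup.exists_apply_ne_one_of_hasEnoughRootsOfUnity K ℂ hy
  have h1 : ∑ α : K →* ℂˣ, (((β * α) y : ℂˣ) : ℂ) = ∑ α : K →* ℂˣ, ((α y : ℂˣ) : ℂ) :=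
    Fintype.sum_equiv (Equiv.mulLeft β) _ _ (fun α => rfl)
  have h2 : ∑ α : K →* ℂˣ, (((β * α) y : ℂˣ) : ℂ)
      = ((β y : ℂˣ) : ℂ) * ∑ α : K →* ℂˣ, ((α y : ℂˣ) : ℂ) := by
    rw [Finset.mul_sum]
    exact Finset.sum_congr rfl fun α _ => by simp [MonoidHom.mul_apply]
  have h3 : (((β y : ℂˣ) : ℂ) - 1) * ∑ α : K →* ℂˣ, ((α y : ℂˣ) : ℂ) = 0 := by
    rw [sub_mul, one_mul, ← h2, h1, sub_self]
  have h4 : ((β y : ℂˣ) : ℂ) ≠ 1 := by simpa [Units.val_eq_one] using hβ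
  rcases mul_eq_zero.mp h3 with h | h
  · exact absurd (by linear_combination h : ((β y : ℂˣ) : ℂ) = 1) h4
  · exact h

open Classical in
lemma charSum_ite (y : K) :
    ∑ α : K →* ℂˣ, ((α y : ℂˣ) : ℂ)
      = if y = 1 then (Fintype.card (K →* ℂˣ) : ℂ) else 0 := by
  split_ifs with h
  · subst h; simp [Finset.card_univ]
  · exact charSum_eq_zero h

/-- For `g ∉ H`, there is a character of `K` that is trivial on `H` but not at `g`. -/
lemma exists_char_trivial_on (H : Subgroup K) {g : K} (hg : g ∉ H) :
    ∃ β : K →* ℂˣ, (∀ h ∈ H, β h = 1) ∧ β g ≠ 1 := by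
  have hq : (g : K ⧸ H) ≠ 1 := by
    simpa [QuotientGroup.eq_one_iff] using hg
  have hne : (Monoid.exponent (K ⧸ H) : ℂ) ≠ 0 := by
    exact_mod_cast Monoid.exponent_ne_zero_of_finite
  have : NeZero ((Monoid.exponent (K ⧸ H) : ℂ)) := ⟨hne⟩
  obtain ⟨b, hb⟩ := CommGroup.exists_apply_ne_one_of_hasEnoughRootsOfUnity (K ⧸ H) ℂ hq
  refine ⟨b.comp (QuotientGroup.mk' H), fun h hh => ?_, hb⟩
  have : ((h : K ⧸ H)) = 1 := (QuotientGroup.eq_one_iff h).mpr hh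
  simp [this]

/-- For `g ∉ H`, `R_H (e_g) = 0`. -/
lemma RH_single_eq_zero (H : Subgroup K) {g : K} (hg : g ∉ H) :
    (∑ α : K →* ℂˣ, ((α g : ℂˣ) : ℂ) • MonoidAlgebra.single (α.comp H.subtype) (1 : ℂ)) = 0 := by
  obtain ⟨β, hβH, hβg⟩ := exists_char_trivial_on H hg
  set S := ∑ α : K →* ℂˣ, ((α g : ℂˣ) : ℂ) • MonoidAlgebra.single (α.comp H.subtype) (1 : ℂ)
    with hS
  have key : ((β g : ℂˣ) : ℂ) • S = S := by
    have e1 : ∑ α : K →* ℂˣ,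
        (((β * α) g : ℂˣ) : ℂ) • MonoidAlgebra.single ((β * α).comp H.subtype) (1 : ℂ) = S :=
      Fintype.sum_equiv (Equiv.mulLeft β) _ _ (fun α => rfl)
    rw [hS, Finset.smul_sum, ← hS, ← e1]
    refine Finset.sum_congr rfl fun α _ => ?_
    have hcomp : (β * α).comp H.subtype = α.comp H.subtype := by
      ext h
      simp [hβH h h.2]
    rw [hcomp, smul_smul, MonoidHom.mul_apply, Units.val_mul]
  have h3 : (((β g : ℂˣ) : ℂ) - 1) • S = 0 := by
    rw [sub_smul, one_smul, key, sub_self]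
  have h4 : (((β g : ℂˣ) : ℂ) - 1) ≠ 0 := by
    simpa [sub_eq_zero, Units.val_eq_one] using hβg
  rcases smul_eq_zero.mp h3 with h | h
  · exact absurd h h4
  · exact h

end aux

/-- the kernel of `R_H : ℂ[K] → ℂ[H*]` is the span of the `e_g`, `g ∈ K \ H`. -/
theorem stmt_5 (K : Type*) [CommGroup K] [Fintype K] (H : Subgroup K) :
    LinearMap.ker (RH H) =
      Submodule.span ℂ
        {x : MonoidAlgebra ℂ K | ∃ g ∉ H, x = MonoidAlgebra.single g (1 : ℂ)} := by
  classical
  have hset : {x : MonoidAlgebra ℂ K | ∃ g ∉ H, x = MonoidAlgebra.single g (1 : ℂ)}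
      = (fun g => MonoidAlgebra.single g (1 : ℂ)) '' ((H : Set K))ᶜ := by
    ext x
    constructor
    · rintro ⟨g, hg, rfl⟩; exact ⟨g, hg, rfl⟩
    · rintro ⟨g, hg, rfl⟩; exact ⟨g, hg, rfl⟩
  rw [hset, ← MonoidAlgebra.supported_eq_span_single]
  ext x
  rw [LinearMap.mem_ker, MonoidAlgebra.mem_supported']
  have hRHapp : ∀ χ : ↥H →* ℂˣ, (RH H x).coeff χ = ∑ g' : K, ∑ α : K →* ℂˣ,
      x.coeff g' * (((α g' : ℂˣ) : ℂ) * (if α.comp H.subtype = χ then 1 else 0)) := by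
    intro χ
    rw [RH]
    simp only [LinearMap.comp_apply, LinearEquiv.coe_coe, MonoidAlgebra.coeffLinearEquiv_apply]
    erw [Finsupp.lift_apply]
    rw [Finsupp.sum_fintype _ _ (fun _ => by simp), MonoidAlgebra.coeff_sum,
      Finsupp.finset_sum_apply]
    refine Finset.sum_congr rfl fun g' _ => ?_
    rw [MonoidAlgebra.coeff_smul, Finsupp.smul_apply, smul_eq_mul, MonoidAlgebra.coeff_sum,
      Finsupp.finset_sum_apply, Finset.mul_sum]
    refine Finset.sum_congr rfl fun α _ => ?_
    rw [MonoidAlgebra.coeff_smul, Finsupp.smul_apply, MonoidAlgebra.coeff_single,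
      Finsupp.single_apply, smul_eq_mul]
  constructor
  · intro hx g hg
    have hgH : g ∈ H := by simpa using hg
    have main : ∑ χ : ↥H →* ℂˣ, (((χ ⟨g, hgH⟩)⁻¹ : ℂˣ) : ℂ) * (RH H x).coeff χ
        = (Fintype.card (K →* ℂˣ) : ℂ) * x.coeff g := by
      calc ∑ χ : ↥H →* ℂˣ, (((χ ⟨g, hgH⟩)⁻¹ : ℂˣ) : ℂ) * (RH H x).coeff χ
          = ∑ χ : ↥H →* ℂˣ, ∑ g' : K, ∑ α : K →* ℂˣ,
              (((χ ⟨g, hgH⟩)⁻¹ : ℂˣ) : ℂ) * (x.coeff g' * (((α g' : ℂˣ) : ℂ) *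
                (if α.comp H.subtype = χ then 1 else 0))) := by
            refine Finset.sum_congr rfl fun χ _ => ?_
            rw [hRHapp χ, Finset.mul_sum]
            exact Finset.sum_congr rfl fun g' _ => Finset.mul_sum _ _ _
        _ = ∑ g' : K, ∑ α : K →* ℂˣ, ∑ χ : ↥H →* ℂˣ,
              (if α.comp H.subtype = χ then
                (((χ ⟨g, hgH⟩)⁻¹ : ℂˣ) : ℂ) * (x.coeff g' * ((α g' : ℂˣ) : ℂ)) else 0) := by
            rw [Finset.sum_comm]
            refine Finset.sum_congr rfl fun g' _ => ?_
            rw [Finset.sum_comm]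
            refine Finset.sum_congr rfl fun α _ => Finset.sum_congr rfl fun χ _ => ?_
            split_ifs with h
            · ring
            · simp
        _ = ∑ g' : K, ∑ α : K →* ℂˣ,
              x.coeff g' * (((α g' : ℂˣ) : ℂ) * (((α g)⁻¹ : ℂˣ) : ℂ)) := by
            refine Finset.sum_congr rfl fun g' _ => Finset.sum_congr rfl fun α _ => ?_
            rw [Finset.sum_ite_eq (Finset.univ : Finset (↥H →* ℂˣ)) (α.comp H.subtype)]
            simp only [Finset.mem_univ, if_true, MonoidHom.comp_apply, Subgroup.coe_subtype]
            ring
        _ = ∑ g' : K, x.coeff g' * ∑ α : K →* ℂˣ, ((α (g' * g⁻¹) : ℂˣ) : ℂ) := by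
            refine Finset.sum_congr rfl fun g' _ => ?_
            rw [Finset.mul_sum]
            refine Finset.sum_congr rfl fun α _ => ?_
            rw [map_mul, map_inv, Units.val_mul]
        _ = ∑ g' : K, x.coeff g' * (if g' * g⁻¹ = 1 then (Fintype.card (K →* ℂˣ) : ℂ) else 0) := by
            refine Finset.sum_congr rfl fun g' _ => ?_
            rw [charSum_ite]
        _ = (Fintype.card (K →* ℂˣ) : ℂ) * x.coeff g := by
            rw [Finset.sum_congr rfl (fun g' _ => by
              rw [show (g' * g⁻¹ = 1) = (g' = g) from propext (by
                constructor
                · intro h; exact mul_inv_eq_one.mp h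
                · intro h; rw [h, mul_inv_cancel])])]
            simp [mul_ite, mul_zero, Finset.sum_ite_eq', mul_comm]
    have hcard : (Fintype.card (K →* ℂˣ) : ℂ) ≠ 0 := by
      exact_mod_cast Fintype.card_ne_zero
    have : (Fintype.card (K →* ℂˣ) : ℂ) * x.coeff g = 0 := by
      rw [← main, hx]
      simp
    exact (mul_eq_zero.mp this).resolve_left hcard
  · intro hx
    rw [RH]
    simp only [LinearMap.comp_apply, LinearEquiv.coe_coe, MonoidAlgebra.coeffLinearEquiv_apply]
    erw [Finsupp.lift_apply]
    refine Finset.sum_eq_zero fun g' hg' => ?_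
    have hgs : x.coeff g' ≠ 0 := Finsupp.mem_support_iff.mp hg'
    have hgnH : g' ∉ H := fun h => hgs (hx g' (by simpa using h))
    dsimp only
    rw [RH_single_eq_zero H hgnH, smul_zero]
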